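/- Let N ≥ 2, ε > 0, f continuous strictly increasing with f(0) = 0, and let U ∈ C²([0,1]) solve −ε²(U'' + (N−1)/x · U') + f(U) = 0 on (0,1) with U'(0) = 0 and U(1) = 0. Then U ≡ 0 on [0,1]. -/

import Mathlib

open Set

lemma stmt7_aux (N : ℕ) (hN : 2 ≤ N) (ε : ℝ) (hε : 0 < ε)
    (f : ℝ → ℝ) (hmono : StrictMono f) (hf0 : f 0 = 0)
    (U : ℝ → ℝ) (hU : ContDiffOn ℝ 2 U (Set.Icc 0 1))
    (hode : ∀ x ∈ Set.Ioo (0:ℝ) 1,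
      -ε ^ 2 * (deriv (deriv U) x + ((N:ℝ) - 1) / x * deriv U x) + f (U x) = 0)
    (hU1 : U 1 = 0) : ∀ x ∈ Set.Icc (0:ℝ) 1, U x ≤ 0 := by
  obtain ⟨n, rfl⟩ : ∃ n, N = n + 2 := ⟨N - 2, by omega⟩
  by_contra hcon
  push_neg at hcon
  obtain ⟨y, hy, hypos⟩ := hcon
  have hUc : ContinuousOn U (Icc 0 1) := hU.continuousOn
  obtain ⟨x₀, hx₀mem, hx₀max⟩ :=
    isCompact_Icc.exists_isMaxOn (⟨0, by norm_num⟩ : (Icc (0:ℝ) 1).Nonempty) hUc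
  have hM : 0 < U x₀ := lt_of_lt_of_le hypos (hx₀max hy)
  have hud : UniqueDiffOn ℝ (Icc (0:ℝ) 1) := uniqueDiffOn_Icc (by norm_num)
  set V := derivWithin U (Icc (0:ℝ) 1) with hVdef
  have hVcd : ContDiffOn ℝ 1 V (Icc (0:ℝ) 1) := hU.derivWithin hud (by norm_num)
  have hVcont : ContinuousOn V (Icc 0 1) := hVcd.continuousOn
  have hmem : ∀ x ∈ Ioo (0:ℝ) 1, Icc (0:ℝ) 1 ∈ nhds x :=
    fun x hx => Icc_mem_nhds hx.1 hx.2
  have hVeq : ∀ x ∈ Ioo (0:ℝ) 1, V x = deriv U x :=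
    fun x hx => derivWithin_of_mem_nhds (hmem x hx)
  have hderivU : ∀ x ∈ Ioo (0:ℝ) 1, HasDerivAt U (V x) x := by
    intro x hx
    have h1 : DifferentiableAt ℝ U x :=
      ((hU.differentiableOn (by norm_num)) x (Ioo_subset_Icc_self hx)).differentiableAt
        (hmem x hx)
    rw [hVeq x hx]
    exact h1.hasDerivAt
  have hdd : ∀ x ∈ Ioo (0:ℝ) 1, DifferentiableAt ℝ (deriv U) x := by
    intro x hx
    have h2 : ContDiffOn ℝ 1 (deriv U) (Ioo (0:ℝ) 1) :=
      (hU.mono Ioo_subset_Icc_self).deriv_of_isOpen isOpen_Ioo (by norm_num)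
    exact ((h2.differentiableOn (by norm_num)) x hx).differentiableAt (isOpen_Ioo.mem_nhds hx)
  -- derivative of the auxiliary function t ↦ t^(n+1) * V t
  have hkey : ∀ x ∈ Ioo (0:ℝ) 1,
      HasDerivAt (fun t : ℝ => t ^ (n + 1) * V t) (x ^ (n + 1) * f (U x) / ε ^ 2) x := by
    intro x hx
    have hdV : HasDerivAt V (deriv (deriv U) x) x := by
      have h1 : HasDerivAt (deriv U) (deriv (deriv U) x) x := (hdd x hx).hasDerivAt
      apply h1.congr_of_eventuallyEq
      filter_upwards [Ioo_mem_nhds hx.1 hx.2] with t ht using hVeq t ht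
    have hpow : HasDerivAt (fun t : ℝ => t ^ (n + 1)) ((n + 1 : ℝ) * x ^ n) x := by
      have := hasDerivAt_pow (n + 1) x
      simpa using this
    have hmul : HasDerivAt (fun t : ℝ => t ^ (n + 1) * V t)
        ((n + 1 : ℝ) * x ^ n * V x + x ^ (n + 1) * deriv (deriv U) x) x := hpow.mul hdV
    convert hmul using 1
    have hodex := hode x hx
    have hxne : x ≠ 0 := ne_of_gt hx.1
    have hεne : (ε : ℝ) ≠ 0 := ne_of_gt hε
    have hNc : ((n + 2 : ℕ) : ℝ) - 1 = (n + 1 : ℝ) := by push_cast; ring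
    rw [hNc] at hodex
    have hfe : f (U x) = ε ^ 2 * (deriv (deriv U) x + (n + 1 : ℝ) / x * deriv U x) := by
      linarith
    rw [hVeq x hx, hfe]
    field_simp
    ring
  -- x₀ < 1
  have hx₀lt1 : x₀ < 1 := by
    rcases lt_or_eq_of_le hx₀mem.2 with h | h
    · exact h
    · exfalso; rw [h, hU1] at hM; exact lt_irrefl 0 hM
  -- first zero of U after x₀
  set S := {x ∈ Icc x₀ 1 | U x = 0} with hSdef
  have hSne : S.Nonempty := ⟨1, ⟨⟨hx₀mem.2, le_refl 1⟩, hU1⟩⟩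
  have hSclosed : IsClosed S := by
    have h1 : ContinuousOn U (Icc x₀ 1) := hUc.mono (Icc_subset_Icc hx₀mem.1 le_rfl)
    have h2 := h1.preimage_isClosed_of_isClosed isClosed_Icc (isClosed_singleton (x := (0:ℝ)))
    convert h2 using 1
    rfl
  have hSbdd : BddBelow S := ⟨x₀, fun x hx => hx.1.1⟩
  set c := sInf S with hcdef
  have hcS : c ∈ S := hSclosed.csInf_mem hSne hSbdd
  have hcge : x₀ ≤ c := le_csInf hSne fun x hx => hx.1.1
  have hUc0 : U c = 0 := hcS.2
  have hcgt : x₀ < c := by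
    rcases lt_or_eq_of_le hcge with h | h
    · exact h
    · exfalso; rw [← h] at hUc0; linarith
  have hcle1 : c ≤ 1 := hcS.1.2
  -- U is positive on [x₀, c)
  have hpos : ∀ x ∈ Ico x₀ c, 0 < U x := by
    intro x hx
    by_contra hle
    push_neg at hle
    have hxmem : x ∈ Icc (0:ℝ) 1 :=
      ⟨le_trans hx₀mem.1 hx.1, le_trans (le_of_lt hx.2) hcle1⟩
    have hne : U x ≠ 0 := by
      intro h0
      have : c ≤ x := csInf_le hSbdd ⟨⟨hx.1, hxmem.2⟩, h0⟩
      linarith [hx.2]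
    have hlt : U x < 0 := lt_of_le_of_ne hle hne
    have hsub : Icc x₀ x ⊆ Icc (0:ℝ) 1 := Icc_subset_Icc hx₀mem.1 hxmem.2
    have hIVT := intermediate_value_Icc' hx.1 (hUc.mono hsub)
    have h0mem : (0:ℝ) ∈ Icc (U x) (U x₀) := ⟨le_of_lt hlt, le_of_lt hM⟩
    obtain ⟨z, hz, hz0⟩ := hIVT h0mem
    have : c ≤ z := csInf_le hSbdd ⟨⟨hz.1, le_trans hz.2 hxmem.2⟩, hz0⟩
    linarith [hz.2, hx.2]
  -- value of the auxiliary function at x₀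
  have hx₀V : x₀ ^ (n + 1) * V x₀ = 0 := by
    rcases eq_or_lt_of_le hx₀mem.1 with h0 | h0
    · rw [← h0]; simp
    · have hloc : IsLocalMax U x₀ := hx₀max.isLocalMax (hmem x₀ ⟨h0, hx₀lt1⟩)
      rw [hVeq x₀ ⟨h0, hx₀lt1⟩, hloc.deriv_eq_zero, mul_zero]
  have hIoosub : Ioo x₀ c ⊆ Ioo (0:ℝ) 1 :=
    fun x hx => ⟨lt_of_le_of_lt hx₀mem.1 hx.1, lt_of_lt_of_le hx.2 hcle1⟩
  have hIccsub : Icc x₀ c ⊆ Icc (0:ℝ) 1 := Icc_subset_Icc hx₀mem.1 hcle1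
  -- the auxiliary function is strictly increasing on [x₀, c]
  have hmono1 : StrictMonoOn (fun t : ℝ => t ^ (n + 1) * V t) (Icc x₀ c) := by
    apply strictMonoOn_of_deriv_pos (convex_Icc _ _)
    · exact ((continuous_pow (n + 1)).continuousOn.mul hVcont).mono hIccsub
    · intro x hx
      rw [interior_Icc] at hx
      have hx' := hIoosub hx
      rw [(hkey x hx').deriv]
      have hfpos : 0 < f (U x) := by
        have hUx := hpos x ⟨le_of_lt hx.1, hx.2⟩
        calc (0:ℝ) = f 0 := hf0.symm
          _ < f (U x) := hmono hUx
      exact div_pos (mul_pos (pow_pos hx'.1 _) hfpos) (pow_pos hε 2)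
  -- hence V > 0 on (x₀, c)
  have hVpos : ∀ x ∈ Ioo x₀ c, 0 < V x := by
    intro x hx
    have h1 : x₀ ^ (n + 1) * V x₀ < x ^ (n + 1) * V x :=
      hmono1 (left_mem_Icc.mpr (le_of_lt hcgt)) ⟨le_of_lt hx.1, le_of_lt hx.2⟩ hx.1
    rw [hx₀V] at h1
    have hxpos : 0 < x := lt_of_le_of_lt hx₀mem.1 hx.1
    by_contra hle
    push_neg at hle
    nlinarith [pow_pos hxpos (n + 1)]
  -- hence U is strictly increasing on [x₀, c], contradiction
  have hUmono : StrictMonoOn U (Icc x₀ c) := by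
    apply strictMonoOn_of_deriv_pos (convex_Icc _ _) (hUc.mono hIccsub)
    intro x hx
    rw [interior_Icc] at hx
    rw [(hderivU x (hIoosub hx)).deriv]
    exact hVpos x hx
  have hfin : U x₀ < U c :=
    hUmono (left_mem_Icc.mpr (le_of_lt hcgt)) (right_mem_Icc.mpr (le_of_lt hcgt)) hcgt
  rw [hUc0] at hfin
  linarith

theorem stmt7 (N : ℕ) (hN : 2 ≤ N) (ε : ℝ) (hε : 0 < ε)
    (f : ℝ → ℝ) (hf : Continuous f) (hmono : StrictMono f) (hf0 : f 0 = 0)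
    (U : ℝ → ℝ) (hU : ContDiffOn ℝ 2 U (Set.Icc 0 1))
    (hode : ∀ x ∈ Set.Ioo (0:ℝ) 1,
      -ε ^ 2 * (deriv (deriv U) x + ((N:ℝ) - 1) / x * deriv U x) + f (U x) = 0)
    (hU'0 : deriv U 0 = 0) (hU1 : U 1 = 0) :
    ∀ x ∈ Set.Icc (0:ℝ) 1, U x = 0 := by
  intro x hx
  have h1 : U x ≤ 0 := stmt7_aux N hN ε hε f hmono hf0 U hU hode hU1 x hx
  have h2 : -U x ≤ 0 := by
    have hmono' : StrictMono (fun y : ℝ => -f (-y)) :=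
      fun a b hab => neg_lt_neg (hmono (neg_lt_neg hab))
    have hf0' : -f (-(0:ℝ)) = 0 := by simp [hf0]
    have hdneg : deriv (fun t : ℝ => -U t) = fun t => -deriv U t := by
      funext t; exact deriv.neg
    have hode' : ∀ z ∈ Set.Ioo (0:ℝ) 1,
        -ε ^ 2 * (deriv (deriv (fun t : ℝ => -U t)) z +
          ((N:ℝ) - 1) / z * deriv (fun t : ℝ => -U t) z) + (-f (-(-U z))) = 0 := by
      intro z hz
      have hodez := hode z hz
      rw [hdneg]
      have h3 : deriv (fun t : ℝ => -deriv U t) z = -deriv (deriv U) z := deriv.neg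
      rw [h3, neg_neg]
      ring_nf
      ring_nf at hodez
      linarith
    exact stmt7_aux N hN ε hε (fun y => -f (-y)) hmono' hf0' (fun t => -U t) hU.neg
      hode' (by simp [hU1]) x hx
  linarith
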